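/- Fix 0 < a < 1 and consider the three collinear points p₁ = (a, 0), p₂ = (0, 0), p₃ = (a − 1, 0) in ℝ² (so dist(p₁,p₃) = 1 and dist(p₁,p₂) = a), and let P = {p₁, p₂, p₃}. Then the smallest d ∈ [0,1] such that the midpoint p₁/2 = (a/2, 0) belongs to d*CH(P) = {d·x + (1−d)·g(P) : x ∈ CH(P)} is d = (2 − a)/(2(1 + a)) = 1 − 3a/(2(1 + a)). In particular, as a → 0⁺ this value tends to 1. -/

import Mathlib

/-- For the collinear configuration `p₁ = (a,0)`, `p₂ = (0,0)`, `p₃ = (a-1,0)`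
with `0 < a < 1`, the least `d ∈ [0,1]` such that the point `(a/2, 0)` lies in
the scaled hull `d*CH(P)` is `d = (2-a)/(2(1+a)) = 1 - 3a/(2(1+a))`; this value
tends to `1` as `a → 0⁺`. -/
theorem least_scale_for_midpoint
    (a : ℝ) (ha0 : 0 < a) (ha1 : a < 1) :
    IsLeast {d : ℝ | d ∈ Set.Icc (0 : ℝ) 1 ∧
        ((a / 2 : ℝ) : ℂ) ∈ (fun x => d • x + (1 - d) • (((2 * a - 1) / 3 : ℝ) : ℂ)) ''
          convexHull ℝ (Set.range ![((a : ℝ) : ℂ), 0, ((a - 1 : ℝ) : ℂ)])}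
      ((2 - a) / (2 * (1 + a))) ∧
    (2 - a) / (2 * (1 + a)) = 1 - 3 * a / (2 * (1 + a)) ∧
    Filter.Tendsto (fun a : ℝ => (2 - a) / (2 * (1 + a)))
      (nhdsWithin 0 (Set.Ioi 0)) (nhds 1) := by
  have h1a : (0:ℝ) < 1 + a := by linarith
  refine ⟨⟨⟨⟨div_nonneg (by linarith) (by linarith), by rw [div_le_one (by positivity)]; linarith⟩, ?_⟩, ?_⟩, ?_, ?_⟩
  · -- membership with witness p₁ = a
    refine ⟨((a : ℝ) : ℂ), subset_convexHull ℝ _ ⟨0, rfl⟩, ?_⟩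
    show ((2 - a) / (2 * (1 + a))) • ((a:ℝ):ℂ) +
        (1 - (2 - a) / (2 * (1 + a))) • (((2 * a - 1) / 3 : ℝ) : ℂ) = ((a / 2 : ℝ) : ℂ)
    rw [Complex.real_smul, Complex.real_smul]
    push_cast
    have : (1 + (a:ℂ)) ≠ 0 := by
      intro h
      have := congrArg Complex.re h
      simp at this; linarith
    field_simp
    ring
  · -- lower bound
    rintro d ⟨⟨hd0, hd1⟩, x, hx, hEq⟩
    have hre : x.re ≤ a := by
      have hsub : convexHull ℝ (Set.range ![((a : ℝ) : ℂ), 0, ((a - 1 : ℝ) : ℂ)]) ⊆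
          {z : ℂ | z.re ≤ a} := by
        apply convexHull_min _ (convex_halfSpace_re_le (r := a))
        rintro z ⟨i, rfl⟩
        fin_cases i <;> simp <;> linarith
      exact hsub hx
    have hEqre := congrArg Complex.re hEq
    simp only [Complex.add_re, Complex.real_smul, Complex.mul_re, Complex.ofReal_re,
      Complex.ofReal_im, zero_mul, sub_zero, mul_zero] at hEqre
    -- hEqre : d * x.re + (1 - d) * ((2*a-1)/3) = a/2
    rw [div_le_iff₀ (by positivity)]
    nlinarith [mul_le_mul_of_nonneg_left hre hd0]
  · field_simp
    ring
  · have hc : ContinuousAt (fun a : ℝ => (2 - a) / (2 * (1 + a))) 0 := by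
      apply ContinuousAt.div
      · fun_prop
      · fun_prop
      · norm_num
    have := hc.tendsto
    norm_num at this
    exact this.mono_left nhdsWithin_le_nhds
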